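/- Let n ≥ 1, let x̄ ∈ ℝⁿ, let ε₀ > 0, let x* ∈ ℝⁿ with ‖x* − x̄‖ > ε₀, suppose g = α(x* − x̄) for some real α < 0, and set z₁ = x̄ + ε₀ (x* − x̄)/‖x* − x̄‖. Then ⟨g, u(x*, z₁)⟩ = −‖g‖, and for every x with ‖x − x̄‖ = ε₀ one has ⟨g, u(x*, z₁)⟩ / ‖x* − z₁‖ ≤ ⟨g, u(x*, x)⟩ / ‖x* − x‖; that is, z₁ minimizes the quantity ⟨g, u(x*, x)⟩/‖x* − x‖ over the sphere of radius ε₀ about x̄. -/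

import Mathlib

open RealInnerProductSpace

/-- If `x*` is outside the closed ball, `g = α(x* − x̄)` with `α < 0`, and
`z₁ = x̄ + ε₀(x* − x̄)/‖x* − x̄‖`, then `⟨g, u(x*, z₁)⟩ = −‖g‖` and `z₁` minimizes
`⟨g, u(x*, x)⟩/‖x* − x‖` over the sphere of radius `ε₀` about `x̄`. -/
theorem statement9 {n : ℕ} (hn : 1 ≤ n)
    (xbar : EuclideanSpace ℝ (Fin n)) (ε₀ : ℝ) (hε₀ : 0 < ε₀)
    (xstar : EuclideanSpace ℝ (Fin n)) (hxstar : ‖xstar - xbar‖ > ε₀)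
    (g : EuclideanSpace ℝ (Fin n)) (α : ℝ) (hα : α < 0)
    (hg : g = α • (xstar - xbar))
    (z₁ : EuclideanSpace ℝ (Fin n))
    (hz₁ : z₁ = xbar + (ε₀ / ‖xstar - xbar‖) • (xstar - xbar)) :
    ⟪g, ‖xstar - z₁‖⁻¹ • (xstar - z₁)⟫ = -‖g‖ ∧
    ∀ x : EuclideanSpace ℝ (Fin n), ‖x - xbar‖ = ε₀ →
      ⟪g, ‖xstar - z₁‖⁻¹ • (xstar - z₁)⟫ / ‖xstar - z₁‖ ≤
        ⟪g, ‖xstar - x‖⁻¹ • (xstar - x)⟫ / ‖xstar - x‖ := by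
  set v := xstar - xbar with hvdef
  set d := ‖v‖ with hddef
  have hv : (0:ℝ) < d := lt_trans hε₀ hxstar
  have hc : (0:ℝ) < 1 - ε₀ / d := by
    rw [sub_pos, div_lt_one hv]; exact hxstar
  have hz : xstar - z₁ = (1 - ε₀ / d) • v := by
    rw [hz₁, hvdef]; module
  have hnz : ‖xstar - z₁‖ = d - ε₀ := by
    rw [hz, norm_smul, Real.norm_eq_abs, abs_of_pos hc, ← hddef]
    field_simp
  have hdε : (0:ℝ) < d - ε₀ := by linarith
  have hip : ⟪g, ‖xstar - z₁‖⁻¹ • (xstar - z₁)⟫ = α * d := by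
    rw [hnz, hz, hg, real_inner_smul_left, real_inner_smul_right,
      real_inner_smul_right, real_inner_self_eq_norm_sq, ← hddef]
    field_simp
  have hng : ‖g‖ = -α * d := by
    rw [hg, norm_smul, Real.norm_eq_abs, abs_of_neg hα, ← hddef]
  refine ⟨by rw [hip, hng]; ring, ?_⟩
  intro x hx
  have hxx : xstar - x = v - (x - xbar) := by rw [hvdef]; abel
  have hr : d - ε₀ ≤ ‖xstar - x‖ := by
    calc d - ε₀ = ‖v‖ - ‖x - xbar‖ := by rw [hx]
      _ ≤ ‖v - (x - xbar)‖ := norm_sub_norm_le _ _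
      _ = ‖xstar - x‖ := by rw [hxx]
  have hrpos : 0 < ‖xstar - x‖ := lt_of_lt_of_le hdε hr
  have hcs : ⟪v, x - xbar⟫ ≤ d * ε₀ := by
    calc ⟪v, x - xbar⟫ ≤ ‖v‖ * ‖x - xbar‖ := real_inner_le_norm _ _
      _ = d * ε₀ := by rw [hx]
  have hip2 : ⟪g, ‖xstar - x‖⁻¹ • (xstar - x)⟫
      = α * ‖xstar - x‖⁻¹ * (d ^ 2 - ⟪v, x - xbar⟫) := by
    rw [hg, real_inner_smul_left, real_inner_smul_right, hxx, inner_sub_right,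
      real_inner_self_eq_norm_sq, ← hddef]
    ring
  have hr2 : ‖xstar - x‖ ^ 2 = d ^ 2 - 2 * ⟪v, x - xbar⟫ + ε₀ ^ 2 := by
    rw [hxx, ← real_inner_self_eq_norm_sq, real_inner_sub_sub_self,
      real_inner_self_eq_norm_sq, real_inner_self_eq_norm_sq, hx, ← hddef]
  rw [hip, hnz, hip2]
  set t := ⟪v, x - xbar⟫ with htdef
  set r := ‖xstar - x‖ with hrdef
  rw [div_le_div_iff₀ hdε hrpos]
  have key : (d ^ 2 - t) * (d - ε₀) ≤ d * r ^ 2 := by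
    nlinarith [mul_nonneg (by linarith : (0:ℝ) ≤ d + ε₀) (by linarith : (0:ℝ) ≤ d * ε₀ - t)]
  have hmul : α * d * r * r ≤ α * r⁻¹ * (d ^ 2 - t) * (d - ε₀) * r := by
    have h1 : α * r⁻¹ * (d ^ 2 - t) * (d - ε₀) * r = α * ((d ^ 2 - t) * (d - ε₀)) := by
      field_simp
    have h2 : α * d * r * r = α * (d * r ^ 2) := by ring
    rw [h1, h2]
    exact mul_le_mul_of_nonpos_left key hα.le
  exact le_of_mul_le_mul_right hmul hrpos
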